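/- Let S be a commutative ring, σ ∈ Aut(S) of order n, and a, b ∈ S^×. Suppose n ∤ m, or at least one of a, b does not lie in the fixed ring S_0 (i.e., the Petit algebra is proper nonassociative). Then any Hamming-weight-preserving nonzero homomorphism G : S_a → S_b whose restriction to S is an automorphism commuting with σ is monomial of degree one, i.e., G(t) = α t for some non-zero-divisor α ∈ S. -/

import Mathlib

open Finset

noncomputable section

namespace PetitFormal

variable {S : Type*}

/-- Partial norm `N_i^τ(β) = ∏_{j=0}^{i-1} τ^j(β)`. -/
def pnorm [CommRing S] (τ : RingAut S) (i : ℕ) (β : S) : S :=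
  ∏ j ∈ Finset.range i, (τ ^ j) β

/-- Multiplication in the skew polynomial ring `S[t;σ]`, with `t·a = σ(a)·t`,
modelled on finitely supported functions `ℕ →₀ S`. -/
def skewMul [CommRing S] (σ : RingAut S) (x y : ℕ →₀ S) : ℕ →₀ S :=
  x.sum fun i c => y.sum fun j d => Finsupp.single (i + j) (c * (σ ^ i) d)

/-- Embedding of degree `< m` polynomials into `ℕ →₀ S`. -/
def toPoly [CommRing S] {m : ℕ} (x : Fin m → S) : ℕ →₀ S :=
  ∑ i : Fin m, Finsupp.single (i : ℕ) (x i)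

/-- One pass of right division by the monic polynomial `f = t^m - f0(t)`:
`reduceAux σ m f0 K` reduces a skew polynomial supported in `[0, m+K)`
to one supported in `[0, m)`, using `t^{m+j} ≡ ∑_i σ^j(f0 i) t^{j+i}` (mod_r f). -/
def reduceAux [CommRing S] (σ : RingAut S) (m : ℕ) (f0 : Fin m → S) :
    ℕ → (ℕ →₀ S) → (ℕ →₀ S)
  | 0, x => x
  | K + 1, x =>
      reduceAux σ m f0 K
        (x - Finsupp.single (m + K) (x (m + K))
          + ∑ j : Fin m, Finsupp.single (K + (j : ℕ)) (x (m + K) * (σ ^ K) (f0 j)))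

/-- Multiplication in the (generally nonassociative) Petit algebra
`S_f = S[t;σ]/S[t;σ](t^m - f0(t))`: multiply in `S[t;σ]` and reduce by right
division by `f = t^m - f0(t)`. -/
def petitMul [CommRing S] (σ : RingAut S) (m : ℕ) (f0 : Fin m → S)
    (x y : Fin m → S) : Fin m → S :=
  fun d => (reduceAux σ m f0 m (skewMul σ (toPoly x) (toPoly y))) (d : ℕ)

/-- The coefficient vector of the constant `a`, so that `t^m - f0 = t^m - a`. -/
def constF [CommRing S] (m : ℕ) (a : S) : Fin m → S :=
  fun i => if (i : ℕ) = 0 then a else 0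

/-- Multiplication in the Petit algebra `S_a = S[t;σ]/S[t;σ](t^m - a)`. -/
def petitMulC [CommRing S] (σ : RingAut S) (m : ℕ) (a : S) :
    (Fin m → S) → (Fin m → S) → (Fin m → S) :=
  petitMul σ m (constF m a)

/-- The monomial `c t^k` as an element of the Petit algebra (zero if `k ≥ m`). -/
def mono [CommRing S] (m : ℕ) (c : S) (k : ℕ) : Fin m → S :=
  fun i => if (i : ℕ) = k then c else 0

/-- The identity `1 = 1·t^0` of the Petit algebra. -/
def pone [CommRing S] (m : ℕ) : Fin m → S := mono m 1 0

/-- Left-nested power `L(z,s) = z(z(⋯(z)))` (`s` factors) in the Petit algebra. -/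
def lpow [CommRing S] (σ : RingAut S) (m : ℕ) (f0 : Fin m → S) (z : Fin m → S) :
    ℕ → Fin m → S
  | 0 => pone m
  | s + 1 => petitMul σ m f0 z (lpow σ m f0 z s)

/-- `G` is a (unital) ring homomorphism from the Petit algebra `S_f` to `S_g`. -/
def IsPetitHom [CommRing S] (σ : RingAut S) (m : ℕ) (f0 g0 : Fin m → S)
    (G : (Fin m → S) → (Fin m → S)) : Prop :=
  (∀ x y, G (x + y) = G x + G y) ∧
  (∀ x y, G (petitMul σ m f0 x y) = petitMul σ m g0 (G x) (G y)) ∧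
  G (pone m) = pone m

/-- `G` is a (unital) ring endomorphism of the skew polynomial ring `S[t;σ]`. -/
def IsSkewHom [CommRing S] (σ : RingAut S) (G : (ℕ →₀ S) → (ℕ →₀ S)) : Prop :=
  (∀ x y, G (x + y) = G x + G y) ∧
  (∀ x y, G (skewMul σ x y) = skewMul σ (G x) (G y)) ∧
  G (Finsupp.single 0 1) = Finsupp.single 0 1

/-- `G` is a (unital) ring homomorphism from `S[t;σ]` to the Petit algebra `S_g`. -/
def IsSkewToPetitHom [CommRing S] (σ : RingAut S) (m : ℕ) (g0 : Fin m → S)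
    (G : (ℕ →₀ S) → (Fin m → S)) : Prop :=
  (∀ x y, G (x + y) = G x + G y) ∧
  (∀ x y, G (skewMul σ x y) = petitMul σ m g0 (G x) (G y)) ∧
  G (Finsupp.single 0 1) = pone m

/-- The monomial map `G_{τ,α,k}` on `S[t;σ]`:
`∑ a_i t^i ↦ ∑ τ(a_i) (α t^k)^i = ∑ τ(a_i) N_i^{σ^k}(α) t^{ik}`. -/
def skewMonomialMap [CommRing S] (σ τ : RingAut S) (α : S) (k : ℕ)
    (x : ℕ →₀ S) : ℕ →₀ S :=
  x.sum fun i c => Finsupp.single (i * k) (τ c * pnorm (σ ^ k) i α)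

/-- The monomial map `G_{τ,α,k}` from `S[t;σ]` into the Petit algebra `S_g`:
`∑ a_i t^i ↦ ∑ τ(a_i) (α t^k)^i`, powers computed by left nesting. -/
def skewToPetitMonomialMap [CommRing S] (σ τ : RingAut S) (m : ℕ)
    (g0 : Fin m → S) (α : S) (k : ℕ) (x : ℕ →₀ S) : Fin m → S :=
  x.sum fun i c => τ c • lpow σ m g0 (mono m α k) i

/-- The monomial map `G_{τ,α,k}` between Petit algebras of degree `m`:
`∑_{i<m} a_i t^i ↦ ∑_{i<m} τ(a_i) (α t^k)^i`, powers computed by left nesting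
in the codomain `S_g`. -/
def petitMonomialMap [CommRing S] (σ τ : RingAut S) (m : ℕ)
    (g0 : Fin m → S) (α : S) (k : ℕ) (x : Fin m → S) : Fin m → S :=
  ∑ i : Fin m, τ (x i) • lpow σ m g0 (mono m α k) (i : ℕ)

/-- The Hamming weight: the number of nonzero coefficients. -/
def hwt [CommRing S] {m : ℕ} (x : Fin m → S) : ℕ := by
  classical exact (Finset.univ.filter fun i => x i ≠ 0).card

section Infra

variable [CommRing S]

theorem skewMul_single (σ : RingAut S) (u v : ℕ) (c d : S) :
    skewMul σ (Finsupp.single u c) (Finsupp.single v d)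
      = Finsupp.single (u + v) (c * (σ ^ u) d) := by
  unfold skewMul
  rw [Finsupp.sum_single_index (by simp), Finsupp.sum_single_index (by simp)]

theorem reduceAux_lowsupp (σ : RingAut S) (m : ℕ) (f0 : Fin m → S)
    (K : ℕ) (x : ℕ →₀ S) (h : ∀ j, m ≤ j → x j = 0) :
    reduceAux σ m f0 K x = x := by
  induction K with
  | zero => rfl
  | succ K ih =>
    show reduceAux σ m f0 K _ = x
    rw [h (m + K) (Nat.le_add_right _ _)]
    simpa using ih

theorem reduceAux_single_high (σ : RingAut S) (m : ℕ) (e : S) (hm : 0 < m)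
    (c : S) {K0 K : ℕ} (h1 : K0 < K) (h2 : K0 < m) :
    reduceAux σ m (constF m e) K (Finsupp.single (m + K0) c)
      = Finsupp.single K0 (c * (σ ^ K0) e) := by
  induction K with
  | zero => omega
  | succ K ih =>
    show reduceAux σ m (constF m e) K _ = _
    rcases Nat.lt_succ_iff_lt_or_eq.mp h1 with h | h
    · have hne : (m + K0 : ℕ) ≠ m + K := by omega
      rw [Finsupp.single_eq_of_ne' hne]
      simpa using ih h
    · subst h
      rw [Finsupp.single_eq_same, sub_self, zero_add]
      have hsum : (∑ j : Fin m, Finsupp.single (K0 + (j : ℕ)) (c * (σ ^ K0) (constF m e j)))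
          = Finsupp.single K0 (c * (σ ^ K0) e) := by
        rw [Finset.sum_eq_single (⟨0, hm⟩ : Fin m)]
        · simp [constF]
        · intro j _ hj
          have : (j : ℕ) ≠ 0 := fun h0 => hj (Fin.ext h0)
          simp [constF, this]
        · simp
      rw [hsum]
      exact reduceAux_lowsupp σ m _ K0 _ (fun j hj => by
        rw [Finsupp.single_apply_eq_zero.mpr (fun hK => by omega)])

theorem toPoly_mono {m : ℕ} (c : S) {u : ℕ} (hu : u < m) :
    toPoly (mono m c u) = Finsupp.single u c := by
  unfold toPoly mono
  rw [Finset.sum_eq_single (⟨u, hu⟩ : Fin m)]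
  · simp
  · intro j _ hj
    have : (j : ℕ) ≠ u := fun h0 => hj (Fin.ext h0)
    simp [this]
  · simp

theorem petit_mono_lt (σ : RingAut S) {m : ℕ} (e : S) (hm : 0 < m) {u v : ℕ}
    (hu : u < m) (hv : v < m) (huv : u + v < m) (c d : S) :
    petitMul σ m (constF m e) (mono m c u) (mono m d v)
      = mono m (c * (σ ^ u) d) (u + v) := by
  unfold petitMul
  rw [toPoly_mono c hu, toPoly_mono d hv, skewMul_single]
  rw [reduceAux_lowsupp σ m _ m _ (fun j hj =>
    Finsupp.single_apply_eq_zero.mpr (fun hK => by omega))]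
  funext i
  simp only [mono, Finsupp.single_apply]
  exact if_congr eq_comm rfl rfl

theorem petit_mono_ge (σ : RingAut S) {m : ℕ} (e : S) (hm : 0 < m) {u v : ℕ}
    (hu : u < m) (hv : v < m) (huv : m ≤ u + v) (c d : S) :
    petitMul σ m (constF m e) (mono m c u) (mono m d v)
      = mono m (c * (σ ^ u) d * (σ ^ (u + v - m)) e) (u + v - m) := by
  obtain ⟨r, hr, hrm⟩ : ∃ r, u + v = m + r ∧ r < m := ⟨u + v - m, by omega, by omega⟩
  unfold petitMul
  rw [toPoly_mono c hu, toPoly_mono d hv, skewMul_single, hr,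
    reduceAux_single_high σ m e hm _ hrm hrm, Nat.add_sub_cancel_left]
  funext i
  simp only [mono, Finsupp.single_apply]
  exact if_congr eq_comm rfl rfl

end Infra
/-- Position sequence of `(α t^k)^s` (left-nested) in a Petit algebra of degree `m`. -/
def uSeq (m k : ℕ) : ℕ → ℕ
  | 0 => 0
  | s + 1 => if k + uSeq m k s < m then k + uSeq m k s else k + uSeq m k s - m

/-- Coefficient sequence of `(α t^k)^s` (left-nested) in `S_e`. -/
def cSeq [CommRing S] (σ : RingAut S) (m k : ℕ) (α e : S) : ℕ → S
  | 0 => 1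
  | s + 1 =>
      if k + uSeq m k s < m then α * (σ ^ k) (cSeq σ m k α e s)
      else α * (σ ^ k) (cSeq σ m k α e s) * (σ ^ (k + uSeq m k s - m)) e

section Layer2

variable [CommRing S]

theorem uSeq_lt {m k : ℕ} (hm : 0 < m) (hk : k < m) : ∀ s, uSeq m k s < m
  | 0 => hm
  | s + 1 => by
    have := uSeq_lt hm hk s
    unfold uSeq
    split <;> omega

theorem lpow_mono (σ : RingAut S) {m k : ℕ} (e α : S) (hm : 0 < m) (hk : k < m) :
    ∀ s, lpow σ m (constF m e) (mono m α k) s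
      = mono m (cSeq σ m k α e s) (uSeq m k s)
  | 0 => rfl
  | s + 1 => by
    show petitMul σ m (constF m e) (mono m α k) (lpow σ m (constF m e) (mono m α k) s) = _
    rw [lpow_mono σ e α hm hk s]
    by_cases h : k + uSeq m k s < m
    · rw [petit_mono_lt σ e hm hk (uSeq_lt hm hk s) h]
      simp only [uSeq, cSeq, if_pos h]
    · rw [petit_mono_ge σ e hm hk (uSeq_lt hm hk s) (by omega)]
      simp only [uSeq, cSeq, if_neg h]

theorem cSeq_isUnit (σ : RingAut S) {m k : ℕ} {α e : S}
    (hα : IsUnit α) (he : IsUnit e) : ∀ s, IsUnit (cSeq σ m k α e s)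
  | 0 => isUnit_one
  | s + 1 => by
    have := cSeq_isUnit σ (m := m) (k := k) hα he s
    unfold cSeq
    split
    · exact hα.mul (this.map (σ ^ k))
    · exact (hα.mul (this.map (σ ^ k))).mul (he.map _)

theorem mono_coeff {m : ℕ} {c d : S} {w : ℕ} (hw : w < m)
    (h : mono m c w = mono m d w) : c = d := by
  have := congrFun h ⟨w, hw⟩
  simpa [mono] using this

theorem mono_inj {m : ℕ} {c d : S} {w w' : ℕ} (hw : w < m) (hc : c ≠ 0)
    (h : mono m c w = mono m d w') : w = w' ∧ c = d := by
  have h2 := congrFun h ⟨w, hw⟩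
  simp only [mono, if_pos rfl] at h2
  by_cases hww : w = w'
  · subst hww; exact ⟨rfl, mono_coeff hw h⟩
  · rw [if_neg hww] at h2; exact absurd h2 hc

theorem hcomm_pow {σ τ : RingAut S} (hcomm : ∀ x, τ (σ x) = σ (τ x)) :
    ∀ (j : ℕ) (x : S), τ ((σ ^ j) x) = (σ ^ j) (τ x)
  | 0, x => rfl
  | j + 1, x => by
    have h1 : (σ ^ (j + 1)) x = (σ ^ j) (σ x) := by
      rw [pow_succ]; rfl
    have h2 : (σ ^ (j + 1)) (τ x) = (σ ^ j) (σ (τ x)) := by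
      rw [pow_succ]; rfl
    rw [h1, h2, hcomm_pow hcomm j (σ x), hcomm x]

theorem sigpow_fix {σ : RingAut S} {x : S} (hx : σ x = x) :
    ∀ j : ℕ, (σ ^ j) x = x
  | 0 => rfl
  | j + 1 => by
    have h1 : (σ ^ (j + 1)) x = (σ ^ j) (σ x) := by rw [pow_succ]; rfl
    rw [h1, hx, sigpow_fix hx j]

theorem hwt_mono_one {m : ℕ} [Nontrivial S] {c : S} {w : ℕ} (hw : w < m)
    (hc : c ≠ 0) : hwt (mono m c w) = 1 := by
  unfold hwt
  rw [Finset.card_eq_one]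
  refine ⟨⟨w, hw⟩, ?_⟩
  ext i
  by_cases hi : (i : ℕ) = w <;>
    simp [mono, hi, hc, Finset.mem_filter, Fin.ext_iff]

end Layer2
section Layer3
variable [CommRing S]

theorem mono_congr {m : ℕ} {c c' : S} {w w' : ℕ} (hw : w = w') (hc : c = c') :
    mono m c w = mono m c' w' := by subst hw; subst hc; rfl

theorem cSeq_succ_factor (σ : RingAut S) (m k : ℕ) (α e : S) (s : ℕ) :
    ∃ R, cSeq σ m k α e (s + 1) = α * R := by
  unfold cSeq
  split
  · exact ⟨_, rfl⟩
  · exact ⟨_, mul_assoc _ _ _⟩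

theorem lpow_t_lt (σ : RingAut S) {m : ℕ} (e : S) (hm : 2 ≤ m) :
    ∀ s, s < m → lpow σ m (constF m e) (mono m 1 1) s = mono m 1 s
  | 0, _ => rfl
  | s + 1, h => by
    show petitMul σ m (constF m e) (mono m 1 1) (lpow σ m (constF m e) (mono m 1 1) s) = _
    rw [lpow_t_lt σ e hm s (by omega),
      petit_mono_lt σ e (by omega) (by omega) (by omega) (by omega)]
    exact mono_congr (by omega) (by simp)

theorem lpow_t_m (σ : RingAut S) {m : ℕ} (e : S) (hm : 2 ≤ m) :
    lpow σ m (constF m e) (mono m 1 1) m = mono m e 0 := by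
  obtain ⟨q, rfl⟩ : ∃ q, m = q + 1 := ⟨m - 1, by omega⟩
  show petitMul σ _ _ (mono _ 1 1) (lpow σ _ _ (mono _ 1 1) q) = _
  rw [lpow_t_lt σ e hm q (by omega),
    petit_mono_ge σ e (by omega) (by omega) (by omega) (by omega)]
  refine mono_congr (by omega) ?_
  have h0 : 1 + q - (q + 1) = 0 := by omega
  simp [h0]

end Layer3
section Layer4
variable [CommRing S]

theorem sig_pow_zero (σ : RingAut S) (x : S) : (σ ^ 0) x = x := rfl

theorem sig_pow_one (σ : RingAut S) (x : S) : (σ ^ 1) x = σ x := by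
  rw [pow_one]

theorem sig_pow_add (σ : RingAut S) (u v : ℕ) (x : S) :
    (σ ^ (u + v)) x = (σ ^ u) ((σ ^ v) x) := by
  rw [pow_add]; rfl

theorem sig_comm (σ : RingAut S) (u : ℕ) (x : S) :
    σ ((σ ^ u) x) = (σ ^ u) (σ x) := by
  have h1 := sig_pow_add σ 1 u x
  have h2 := sig_pow_add σ u 1 x
  rw [sig_pow_one] at h1
  rw [sig_pow_one] at h2
  rw [Nat.add_comm 1 u] at h1
  rw [← h2, ← h1]

theorem uSeq_succ (m k s : ℕ) :
    uSeq m k (s + 1)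
      = if k + uSeq m k s < m then k + uSeq m k s else k + uSeq m k s - m := rfl

theorem cSeq_succ (σ : RingAut S) (m k : ℕ) (α e : S) (s : ℕ) :
    cSeq σ m k α e (s + 1)
      = if k + uSeq m k s < m then α * (σ ^ k) (cSeq σ m k α e s)
        else α * (σ ^ k) (cSeq σ m k α e s) * (σ ^ (k + uSeq m k s - m)) e := rfl

theorem cSeq_factor (σ : RingAut S) (m k : ℕ) (α e : S) {s : ℕ} (hs : 0 < s) :
    ∃ R, cSeq σ m k α e s = α * R := by
  obtain ⟨q, rfl⟩ : ∃ q, s = q + 1 := ⟨s - 1, by omega⟩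
  rw [cSeq_succ]
  split
  · exact ⟨_, rfl⟩
  · exact ⟨_, mul_assoc _ _ _⟩

end Layer4
section Layer4b
variable [CommRing S]

theorem hwt_eq_one {m : ℕ} (x : Fin m → S) (hx : hwt x = 1) :
    ∃ j, x j ≠ 0 ∧ ∀ i, x i ≠ 0 → i = j := by
  classical
  unfold hwt at hx
  obtain ⟨j, hj⟩ := Finset.card_eq_one.mp hx
  have hmem : ∀ i : Fin m, x i ≠ 0 → i = j := by
    intro i hi
    have h1 : i ∈ Finset.filter (fun i => x i ≠ 0) Finset.univ :=
      Finset.mem_filter.mpr ⟨Finset.mem_univ i, hi⟩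
    rw [Finset.filter_congr_decidable] at hj
    rw [hj] at h1
    exact Finset.mem_singleton.mp h1
  have hjne : x j ≠ 0 := by
    have h1 : j ∈ Finset.filter (fun i => x i ≠ 0) Finset.univ := by
      rw [Finset.filter_congr_decidable] at hj
      rw [hj]
      exact Finset.mem_singleton_self j
    exact (Finset.mem_filter.mp h1).2
  exact ⟨j, hjne, hmem⟩

end Layer4b
end PetitFormal

open PetitFormal

/-- Corollary `C:onlyweightone`: if `n ∤ m`, or one of `a`, `b` is not fixed by
`σ` (proper nonassociativity), then every Hamming-weight-preserving nonzero
homomorphism `G : S_a → S_b` whose restriction to `S` is an automorphism `τ`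
commuting with `σ` is monomial of degree one: `G(t) = α t` with `α` a
non-zero-divisor. -/
theorem stmt9 {S : Type*} [CommRing S] (σ : RingAut S) (n : ℕ)
    (hn : orderOf σ = n) (hn0 : 0 < n) (m : ℕ) (hm : 0 < m) (a b : Sˣ)
    (hproper : ¬ n ∣ m ∨ σ (a : S) ≠ (a : S) ∨ σ (b : S) ≠ (b : S))
    (G : (Fin m → S) → (Fin m → S)) (τ : RingAut S)
    (hcomm : ∀ x, τ (σ x) = σ (τ x))
    (hres : ∀ c : S, G (mono m c 0) = mono m (τ c) 0)
    (hhom : IsPetitHom σ m (constF m (a : S)) (constF m (b : S)) G)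
    (hwtp : ∀ x, hwt (G x) = hwt x) :
    ∃ α : S, α ∈ nonZeroDivisors S ∧ G (mono m 1 1) = mono m α 1 := by
  rcases subsingleton_or_nontrivial S with hS | hS
  · exact ⟨1, Submonoid.one_mem _, Subsingleton.elim _ _⟩
  by_cases hm1 : m = 1
  · subst hm1
    have h0 : (mono 1 (1 : S) 1) = 0 := by
      funext i
      have hi : (i : ℕ) ≠ 1 := by omega
      simp [mono, hi]
    have hG0 : G 0 = 0 := by
      have h := hhom.1 0 0
      rw [add_zero] at h
      exact add_eq_right.mp h.symm
    exact ⟨1, Submonoid.one_mem _, by rw [h0, hG0]⟩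
  have hm2 : 2 ≤ m := by omega
  obtain ⟨hadd, hmul, hone⟩ := hhom
  have hm0 : 0 < m := hm
  -- G(t) has Hamming weight one
  have hwt1 : hwt (G (mono m (1 : S) 1)) = 1 := by
    rw [hwtp]; exact hwt_mono_one (by omega) one_ne_zero
  obtain ⟨j, hjne, hjuniq⟩ := hwt_eq_one _ hwt1
  set α := G (mono m (1 : S) 1) j with hαdef
  set k := (j : ℕ) with hkdef
  have hk_lt : k < m := j.isLt
  have hGt : G (mono m (1 : S) 1) = mono m α k := by
    funext i
    by_cases hij : i = j
    · subst hij
      have h1 : mono m α k i = α := by simp [mono, hkdef]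
      rw [h1]
    · have h0 : G (mono m (1 : S) 1) i = 0 := by
        by_contra h0
        exact hij (hjuniq i h0)
      have hik : (i : ℕ) ≠ k := fun h => hij (Fin.ext h)
      simp [mono, hik, h0]
  have hUlt : ∀ s, uSeq m k s < m := uSeq_lt hm0 hk_lt
  -- images of powers of t
  have hGlpow : ∀ s, G (lpow σ m (constF m (a : S)) (mono m 1 1) s)
      = mono m (cSeq σ m k α (b : S) s) (uSeq m k s) := by
    intro s
    induction s with
    | zero => exact hone
    | succ s ih =>
      have hstep : petitMul σ m (constF m (b : S)) (mono m α k)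
          (mono m (cSeq σ m k α (b : S) s) (uSeq m k s))
          = mono m (cSeq σ m k α (b : S) (s + 1)) (uSeq m k (s + 1)) := by
        rw [← lpow_mono σ (b : S) α hm0 hk_lt s]
        exact lpow_mono σ (b : S) α hm0 hk_lt (s + 1)
      calc G (lpow σ m (constF m (a : S)) (mono m 1 1) (s + 1))
          = petitMul σ m (constF m (b : S)) (G (mono m 1 1))
              (G (lpow σ m (constF m (a : S)) (mono m 1 1) s)) := hmul _ _
        _ = _ := by rw [hGt, ih]; exact hstep
  have hG1i : ∀ i, i < m → G (mono m (1 : S) i)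
      = mono m (cSeq σ m k α (b : S) i) (uSeq m k i) := by
    intro i hi
    rw [← lpow_t_lt σ (a : S) hm2 i hi]
    exact hGlpow i
  have hGam : mono m (τ (a : S)) 0 = mono m (cSeq σ m k α (b : S) m) (uSeq m k m) := by
    rw [← hres (a : S), ← lpow_t_m σ (a : S) hm2]
    exact hGlpow m
  have hτa : IsUnit (τ (a : S)) := (Units.isUnit a).map τ
  obtain ⟨hum, hcm⟩ := mono_inj hm0 hτa.ne_zero hGam
  -- α is a unit
  have hαu : IsUnit α := by
    obtain ⟨R, hR⟩ := cSeq_factor σ m k α (b : S) hm0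
    rw [hR] at hcm
    exact isUnit_of_mul_isUnit_left (hcm ▸ hτa)
  have hCu : ∀ s, IsUnit (cSeq σ m k α (b : S) s) := cSeq_isUnit σ hαu b.isUnit
  -- G on general monomials
  have hGmono : ∀ (e : S) (i : ℕ), i < m → G (mono m e i)
      = mono m (τ e * cSeq σ m k α (b : S) i) (uSeq m k i) := by
    intro e i hi
    have h1 : petitMul σ m (constF m (a : S)) (mono m e 0) (mono m 1 i)
        = mono m e i := by
      rw [petit_mono_lt σ (a : S) hm0 hm0 hi (by omega)]
      exact mono_congr (by omega) (by simp [sig_pow_zero])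
    have h2 := hmul (mono m e 0) (mono m (1 : S) i)
    rw [h1, hres, hG1i i hi,
      petit_mono_lt σ (b : S) hm0 hm0 (hUlt i) (by have := hUlt i; omega)] at h2
    rw [h2]
    exact mono_congr (by omega) (by rw [sig_pow_zero])
  -- the exponent relation σ^{u_i} = σ^i
  have hKR : ∀ i, i < m → ∀ x : S, (σ ^ uSeq m k i) x = (σ ^ i) x := by
    intro i hi x
    have h1 : petitMul σ m (constF m (a : S)) (mono m 1 i) (mono m (τ.symm x) 0)
        = mono m ((σ ^ i) (τ.symm x)) i := by
      rw [petit_mono_lt σ (a : S) hm0 hi hm0 (by omega)]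
      exact mono_congr (by omega) (by rw [one_mul])
    have h2 := hmul (mono m (1 : S) i) (mono m (τ.symm x) 0)
    rw [h1, hGmono _ i hi, hres, hG1i i hi,
      petit_mono_lt σ (b : S) hm0 (hUlt i) hm0 (by have := hUlt i; omega)] at h2
    have h3 := mono_coeff (hUlt i) (h2.trans (mono_congr (by omega) rfl))
    rw [hcomm_pow hcomm i (τ.symm x), RingEquiv.apply_symm_apply] at h3
    have h4 : cSeq σ m k α (b : S) i * (σ ^ i) x
        = cSeq σ m k α (b : S) i * (σ ^ uSeq m k i) x := by
      rw [← h3]; ring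
    exact ((hCu i).mul_left_cancel h4).symm
  -- the dagger relation
  have hdag : ∀ i, i + 1 ≤ m →
      α * (σ ^ k) (cSeq σ m k α (b : S) i)
        = cSeq σ m k α (b : S) i * (σ ^ uSeq m k i) α := by
    intro i hi1
    have hi : i < m := by omega
    have hL : G (petitMul σ m (constF m (a : S)) (mono m 1 i) (mono m 1 1))
        = mono m (cSeq σ m k α (b : S) (i + 1)) (uSeq m k (i + 1)) := by
      rcases lt_or_eq_of_le hi1 with h | h
      · have hin : petitMul σ m (constF m (a : S)) (mono m (1 : S) i) (mono m 1 1)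
            = mono m 1 (i + 1) := by
          rw [petit_mono_lt σ (a : S) hm0 hi (by omega) (by omega)]
          exact mono_congr (by omega) (by simp)
        rw [hin, ← lpow_t_lt σ (a : S) hm2 (i + 1) h]
        exact hGlpow (i + 1)
      · have hin : petitMul σ m (constF m (a : S)) (mono m (1 : S) i) (mono m 1 1)
            = mono m (a : S) 0 := by
          rw [petit_mono_ge σ (a : S) hm0 hi (by omega) (by omega)]
          refine mono_congr (by omega) ?_
          have h0 : i + 1 - m = 0 := by omega
          rw [h0, sig_pow_zero, map_one, one_mul, one_mul]
        rw [hin, hres, h]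
        exact hGam
    have h2 := hmul (mono m (1 : S) i) (mono m (1 : S) 1)
    rw [hL, hG1i i hi, hGt] at h2
    by_cases hw : uSeq m k i + k < m
    · rw [petit_mono_lt σ (b : S) hm0 (hUlt i) hk_lt hw] at h2
      have hu : uSeq m k (i + 1) = uSeq m k i + k := by
        rw [uSeq_succ, if_pos (by omega)]; omega
      have hc : cSeq σ m k α (b : S) (i + 1)
          = α * (σ ^ k) (cSeq σ m k α (b : S) i) := by
        rw [cSeq_succ, if_pos (by omega)]
      have h3 := mono_coeff (hUlt (i + 1)) (h2.trans (mono_congr (by omega) rfl))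
      rw [hc] at h3
      exact h3
    · rw [petit_mono_ge σ (b : S) hm0 (hUlt i) hk_lt (by omega)] at h2
      have hu : uSeq m k (i + 1) = k + uSeq m k i - m := by
        rw [uSeq_succ, if_neg (by omega)]
      have hc : cSeq σ m k α (b : S) (i + 1)
          = α * (σ ^ k) (cSeq σ m k α (b : S) i)
            * (σ ^ (k + uSeq m k i - m)) (b : S) := by
        rw [cSeq_succ, if_neg (by omega)]
      have h3 := mono_coeff (hUlt (i + 1)) (h2.trans (mono_congr (by omega) rfl))
      rw [hc, show k + uSeq m k i - m = uSeq m k i + k - m from by omega] at h3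
      have hbu : IsUnit ((σ ^ (uSeq m k i + k - m)) (b : S)) :=
        (Units.isUnit b).map _
      exact hbu.mul_right_cancel h3
  -- basic values of the sequences
  have hu1 : uSeq m k 1 = k := by
    rw [uSeq_succ, show uSeq m k 0 = 0 from rfl, if_pos (by omega)]
    omega
  have hC1 : cSeq σ m k α (b : S) 1 = α := by
    rw [cSeq_succ, show uSeq m k 0 = 0 from rfl, if_pos (by omega),
      show cSeq σ m k α (b : S) 0 = 1 from rfl, map_one, mul_one]
  have hσk : ∀ x : S, (σ ^ k) x = σ x := by
    intro x
    have h := hKR 1 (by omega) x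
    rw [hu1, sig_pow_one] at h
    exact h
  -- k is at least 1
  have hk1 : 1 ≤ k := by
    by_contra hk0
    have hk0' : k = 0 := by omega
    have hσ1 : σ = 1 := by
      ext x
      have h := hσk x
      rw [hk0', sig_pow_zero] at h
      exact h.symm
    have hn1 : n = 1 := by rw [← hn, hσ1, orderOf_one]
    rcases hproper with h | h | h
    · exact h (hn1 ▸ one_dvd m)
    · exact h (by rw [hσ1]; rfl)
    · exact h (by rw [hσ1]; rfl)
  by_cases hk1' : k = 1
  · exact ⟨α, hαu.mem_nonZeroDivisors, by rw [hGt, hk1']⟩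
  exfalso
  have hk2 : 2 ≤ k := by omega
  have hm3 : 3 ≤ m := by omega
  -- the first wrap index i0
  have hex : ∃ i, m ≤ i * k := ⟨m, by
    calc m = m * 1 := by omega
    _ ≤ m * k := Nat.mul_le_mul_left m hk1⟩
  have hi0 : m ≤ Nat.find hex * k := Nat.find_spec hex
  set i0 := Nat.find hex with hi0def
  have hi0min : ∀ i, i < i0 → i * k < m := fun i h =>
    Nat.lt_of_not_le (Nat.find_min hex h)
  have hi0le : i0 ≤ m - 1 := Nat.find_min' hex (by
    calc m ≤ (m - 1) * 2 := by omega
    _ ≤ (m - 1) * k := Nat.mul_le_mul_left (m - 1) hk2)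
  have hi0ge : 2 ≤ i0 := by
    rcases Nat.lt_or_ge i0 2 with h | h
    · exfalso
      have h2 : i0 * k ≤ 1 * k := Nat.mul_le_mul_right k (by omega)
      rw [one_mul] at h2
      omega
    · exact h
  set j0 := i0 - 1 with hj0def
  have hij0 : i0 = j0 + 1 := by omega
  have hj0k : j0 * k < m := hi0min j0 (by omega)
  -- uSeq on the pre-wrap range
  have hupre : ∀ i, i * k < m → uSeq m k i = i * k := by
    intro i
    induction i with
    | zero =>
      intro _
      rw [show uSeq m k 0 = 0 from rfl]
      omega
    | succ i ih =>
      intro h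
      have hexp : (i + 1) * k = i * k + k := by ring
      have hik : i * k < m := by omega
      rw [uSeq_succ, ih hik, if_pos (by omega)]
      omega
  have hu_j0 : uSeq m k j0 = j0 * k := hupre j0 hj0k
  have hexp0 : k + j0 * k = i0 * k := by rw [hij0]; ring
  have hu_i0 : uSeq m k i0 = i0 * k - m := by
    have hexp1 : (j0 + 1) * k = k + j0 * k := by ring
    rw [hij0, uSeq_succ, hu_j0, if_neg (by omega)]
    omega
  -- σ^m = 1, hence n ∣ m
  have hσkE : σ ^ k = σ := RingEquiv.ext hσk
  have hσi0E : σ ^ uSeq m k i0 = σ ^ i0 := RingEquiv.ext (hKR i0 (by omega))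
  have hmulE : σ ^ (i0 * k) = σ ^ i0 := by rw [mul_comm, pow_mul, hσkE]
  have hcomb : σ ^ (i0 * k) = σ ^ uSeq m k i0 * σ ^ m := by
    rw [hu_i0, ← pow_add]
    congr 1
    omega
  have hσm1 : σ ^ m = 1 := by
    rw [hmulE, hσi0E] at hcomb
    exact mul_eq_left.mp hcomb.symm
  have hnm : n ∣ m := by rw [← hn]; exact orderOf_dvd_of_pow_eq_one hσm1
  have hσm : ∀ x : S, (σ ^ m) x = x := by intro x; rw [hσm1]; rfl
  -- σ fixes b
  have hσb : σ (b : S) = (b : S) := by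
    have hd1 := hdag j0 (by omega)
    have hd2 := hdag i0 (by omega)
    have hwj : ¬ (k + uSeq m k j0 < m) := by rw [hu_j0]; omega
    have hcrec := cSeq_succ σ m k α (b : S) j0
    rw [← hij0, if_neg hwj] at hcrec
    have hexpu : k + uSeq m k j0 - m = uSeq m k i0 := by rw [hu_j0, hu_i0]; omega
    rw [hexpu, hd1] at hcrec
    rw [hcrec, map_mul, map_mul, hσkE] at hd2
    rw [hσkE] at hd1
    have hKjE : σ ^ uSeq m k j0 = σ ^ j0 := RingEquiv.ext (hKR j0 (by omega))
    have hstep : σ ((σ ^ uSeq m k j0) α) = (σ ^ uSeq m k i0) α := by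
      rw [hKjE, hσi0E, hij0, sig_comm, sig_pow_add σ j0 1, sig_pow_one]
    -- cancel units to get σ (σ^{U i0} b) = σ^{U i0} b
    have hZ : IsUnit (cSeq σ m k α (b : S) j0 * (σ ^ uSeq m k j0) α
        * (σ ^ uSeq m k i0) α) :=
      ((hCu j0).mul (hαu.map _)).mul (hαu.map _)
    have hkey : cSeq σ m k α (b : S) j0 * (σ ^ uSeq m k j0) α
          * (σ ^ uSeq m k i0) α * σ ((σ ^ uSeq m k i0) (b : S))
        = cSeq σ m k α (b : S) j0 * (σ ^ uSeq m k j0) α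
          * (σ ^ uSeq m k i0) α * ((σ ^ uSeq m k i0) (b : S)) := by
      linear_combination hd2
        - ((σ ^ uSeq m k i0) α * σ ((σ ^ uSeq m k i0) (b : S))) * hd1
        - (α * σ (cSeq σ m k α (b : S) j0) * σ ((σ ^ uSeq m k i0) (b : S))) * hstep
    have hfix : σ ((σ ^ uSeq m k i0) (b : S)) = (σ ^ uSeq m k i0) (b : S) :=
      hZ.mul_left_cancel hkey
    rw [sig_comm] at hfix
    exact (σ ^ uSeq m k i0).injective hfix
  -- σ fixes a
  have hσa : σ (a : S) = (a : S) := by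
    have hq : m - 1 + 1 = m := by omega
    have hum0 : uSeq m k m = 0 := hum.symm
    have hutop : k + uSeq m k (m - 1) = m := by
      have h : uSeq m k (m - 1 + 1) = 0 := by rw [hq]; exact hum0
      rw [uSeq_succ] at h
      by_cases hcond : k + uSeq m k (m - 1) < m
      · rw [if_pos hcond] at h; omega
      · rw [if_neg hcond] at h; omega
    have hwtop : ¬ (k + uSeq m k (m - 1) < m) := by omega
    have hctop := cSeq_succ σ m k α (b : S) (m - 1)
    rw [hq, if_neg hwtop] at hctop
    have hze : k + uSeq m k (m - 1) - m = 0 := by omega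
    rw [hze, sig_pow_zero] at hctop
    have hd3 := hdag (m - 1) (by omega)
    have hτaeq : τ (a : S) = cSeq σ m k α (b : S) (m - 1)
        * (σ ^ uSeq m k (m - 1)) α * (b : S) := by
      rw [hcm, hctop, hd3]
    have hum1 : uSeq m k (m - 1) = m - k := by omega
    have hu2 := uSeq_succ m k 1
    have hc2 := cSeq_succ σ m k α (b : S) 1
    rw [hu1] at hu2 hc2
    rw [hC1] at hc2
    have hin : petitMul σ m (constF m (a : S)) (mono m (1 : S) (m - 1)) (mono m (1 : S) 2)
        = mono m (σ (a : S)) 1 := by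
      rw [petit_mono_ge σ (a : S) hm0 (by omega) (by omega) (by omega)]
      refine mono_congr (by omega) ?_
      rw [show m - 1 + 2 - m = 1 from by omega, map_one, one_mul, one_mul, sig_pow_one]
    have h2 := hmul (mono m (1 : S) (m - 1)) (mono m (1 : S) 2)
    rw [hin, hGmono _ 1 (by omega), hG1i (m - 1) (by omega), hG1i 2 (by omega)] at h2
    rw [hC1, hu1, hum1] at h2
    by_cases hkk : k + k < m
    · rw [if_pos hkk] at hu2 hc2
      rw [hu2, hc2] at h2
      rw [petit_mono_ge σ (b : S) hm0 (by omega) (by omega) (by omega)] at h2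
      have hcoef := mono_coeff hk_lt (h2.trans (mono_congr (by omega) rfl))
      rw [map_mul] at hcoef
      rw [show (σ ^ (m - k)) ((σ ^ k) α) = α from by
        rw [← sig_pow_add, show m - k + k = m from by omega]; exact hσm α] at hcoef
      rw [show (σ ^ (m - k + (k + k) - m)) (b : S) = (b : S) from by
        rw [show m - k + (k + k) - m = k from by omega, hσkE]; exact hσb] at hcoef
      have hfin : τ (σ (a : S)) * α = τ (a : S) * α := by
        rw [hτaeq, hum1]
        linear_combination hcoef
      exact τ.injective (hαu.mul_right_cancel hfin)
    · rw [if_neg hkk] at hu2 hc2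
      rw [hu2, hc2] at h2
      rw [petit_mono_lt σ (b : S) hm0 (by omega) (by omega) (by omega)] at h2
      have hcoef := mono_coeff hk_lt (h2.trans (mono_congr (by omega) rfl))
      rw [map_mul, map_mul] at hcoef
      rw [show (σ ^ (m - k)) ((σ ^ k) α) = α from by
        rw [← sig_pow_add, show m - k + k = m from by omega]; exact hσm α] at hcoef
      rw [show (σ ^ (m - k)) ((σ ^ (k + k - m)) (b : S)) = (b : S) from by
        rw [← sig_pow_add, show m - k + (k + k - m) = k from by omega, hσkE]
        exact hσb] at hcoef
      have hfin : τ (σ (a : S)) * α = τ (a : S) * α := by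
        rw [hτaeq, hum1]
        linear_combination hcoef
      exact τ.injective (hαu.mul_right_cancel hfin)
  rcases hproper with h | h | h
  · exact h hnm
  · exact h hσa
  · exact h hσb
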